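/- If X_1,...,X_n are mutually independent non-negative integrable random variables and ρ(S) is the unique root of ∑_{i∈S} E[(X_i − r)^+] = r for a k-subset S, then E[max_{i∈S} X_i] ≥ ρ(S). -/

import Mathlib

open MeasureTheory ProbabilityTheory

lemma iIndepFun_of_ae_eq' {Ω : Type*} [MeasurableSpace Ω] {μ : Measure Ω} {n : ℕ}
    {X Y : Fin n → Ω → ℝ}
    (h : iIndepFun X μ)
    (hXY : ∀ i, X i =ᵐ[μ] Y i) :
    iIndepFun Y μ := by
  rw [iIndepFun_iff_measure_inter_preimage_eq_mul] at h ⊢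
  intro T sets hsets
  have hae : ∀ i, (Y i ⁻¹' sets i : Set Ω) =ᵐ[μ] (X i ⁻¹' sets i) := by
    intro i
    filter_upwards [hXY i] with ω hω
    show (Y i ω ∈ sets i) = (X i ω ∈ sets i)
    rw [hω]
  have hall : ∀ᵐ ω ∂μ, ∀ i ∈ T, X i ω = Y i ω :=
    (Filter.eventually_all_finset T).2 fun i _ => hXY i
  have hinter : ((⋂ i ∈ T, Y i ⁻¹' sets i : Set Ω) : Set Ω) =ᵐ[μ] (⋂ i ∈ T, X i ⁻¹' sets i) := by
    filter_upwards [hall] with ω hω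
    show (ω ∈ ⋂ i ∈ T, Y i ⁻¹' sets i) = (ω ∈ ⋂ i ∈ T, X i ⁻¹' sets i)
    simp only [Set.mem_iInter, Set.mem_preimage, eq_iff_iff]
    constructor
    · intro H j hj; rw [hω j hj]; exact H j hj
    · intro H j hj; rw [← hω j hj]; exact H j hj
  calc μ (⋂ i ∈ T, Y i ⁻¹' sets i) = μ (⋂ i ∈ T, X i ⁻¹' sets i) := measure_congr hinter
    _ = ∏ i ∈ T, μ (X i ⁻¹' sets i) := h T hsets
    _ = ∏ i ∈ T, μ (Y i ⁻¹' sets i) := Finset.prod_congr rfl fun i _ => (measure_congr (hae i)).symm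

theorem expected_max_ge_root
    {Ω : Type*} [MeasurableSpace Ω] (μ : Measure Ω) [IsProbabilityMeasure μ]
    {n k : ℕ} (X : Fin n → Ω → ℝ)
    (hX : ∀ i, Integrable (X i) μ) (hX0 : ∀ i ω, 0 ≤ X i ω)
    (hindep : ProbabilityTheory.iIndepFun X μ)
    (S : Finset (Fin n)) (hS : S.Nonempty) (hcard : S.card = k)
    (ρ : ℝ) (hρ : ∑ i ∈ S, ∫ ω, max (X i ω - ρ) 0 ∂μ = ρ) :
    ρ ≤ ∫ ω, S.sup' hS (fun i => X i ω) ∂μ := by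
  classical
  -- measurable nonnegative modifications
  set Y : Fin n → Ω → ℝ := fun i ω => max ((hX i).1.mk (X i) ω) 0 with hYdef
  have hYmeas : ∀ i, Measurable (Y i) := fun i =>
    ((hX i).1.measurable_mk).max measurable_const
  have hXY : ∀ i, X i =ᵐ[μ] Y i := by
    intro i
    filter_upwards [(hX i).1.ae_eq_mk] with ω hω
    rw [hYdef]; dsimp only; rw [← hω, max_eq_left (hX0 i ω)]
  have hYint : ∀ i, Integrable (Y i) μ := fun i => (hX i).congr (hXY i)
  have hY0 : ∀ i ω, 0 ≤ Y i ω := fun i ω => le_max_right _ _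
  have hindepY : iIndepFun Y μ := iIndepFun_of_ae_eq' hindep hXY
  have hsumeq : ∑ i ∈ S, ∫ ω, max (X i ω - ρ) 0 ∂μ
      = ∑ i ∈ S, ∫ ω, max (Y i ω - ρ) 0 ∂μ := by
    refine Finset.sum_congr rfl fun i _ => integral_congr_ae ?_
    filter_upwards [hXY i] with ω hω
    rw [hω]
  have hρY : ∑ i ∈ S, ∫ ω, max (Y i ω - ρ) 0 ∂μ = ρ := hsumeq.symm.trans hρ
  have hsup : ∫ ω, S.sup' hS (fun i => X i ω) ∂μ = ∫ ω, S.sup' hS (fun i => Y i ω) ∂μ := by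
    refine integral_congr_ae ?_
    filter_upwards [(Filter.eventually_all_finset S).2 fun i _ => hXY i] with ω hω
    exact Finset.sup'_congr hS rfl fun i hi => hω i hi
  rw [hsup]
  -- ρ is nonnegative
  have hρ0 : 0 ≤ ρ := by
    rw [← hρY]
    exact Finset.sum_nonneg fun i _ => integral_nonneg fun ω => le_max_right _ _
  -- the positive parts
  set g : Fin n → Ω → ℝ := fun i ω => max (Y i ω - ρ) 0 with hgdef
  have hgmeas : ∀ i, Measurable (g i) := fun i =>
    ((hYmeas i).sub measurable_const).max measurable_const
  have hgint : ∀ i, Integrable (g i) μ :=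
    fun i => ((hYint i).sub (integrable_const ρ)).sup (integrable_const 0)
  have hg0 : ∀ i ω, 0 ≤ g i ω := fun i ω => le_max_right _ _
  -- events
  set B : Fin n → Set Ω := fun i => ⋂ j ∈ S.erase i, Y j ⁻¹' Set.Iio ρ with hBdef
  have hBmeas : ∀ i, MeasurableSet (B i) := fun i =>
    MeasurableSet.biInter (S.erase i).countable_toSet
      (fun j _ => (hYmeas j) measurableSet_Iio)
  set C : Set Ω := ⋂ j ∈ S, Y j ⁻¹' Set.Iio ρ with hCdef
  have hCmeas : MeasurableSet C :=
    MeasurableSet.biInter S.countable_toSet (fun j _ => (hYmeas j) measurableSet_Iio)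
  have hCB : ∀ i, C ⊆ B i := by
    intro i ω hω
    simp only [hBdef, hCdef, Set.mem_iInter, Set.mem_preimage, Set.mem_Iio] at *
    exact fun j hj => hω j (Finset.mem_of_mem_erase hj)
  -- membership characterizations
  have hmemB : ∀ i ω, ω ∈ B i ↔ ∀ j ∈ S.erase i, Y j ω < ρ := by
    intro i ω; simp [hBdef]
  have hmemC : ∀ ω, ω ∈ C ↔ ∀ j ∈ S, Y j ω < ρ := by
    intro ω; simp [hCdef]
  -- the functions to integrate
  set f : Fin n → Ω → ℝ := fun i ω => g i ω * (B i).indicator (fun _ => (1:ℝ)) ω with hfdef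
  have hfeq : ∀ i, f i = (B i).indicator (g i) := by
    intro i; funext ω
    rw [hfdef]; dsimp only
    by_cases h : ω ∈ B i <;> simp [Set.indicator_apply, h]
  have hfint : ∀ i, Integrable (f i) μ := by
    intro i; rw [hfeq i]; exact (hgint i).indicator (hBmeas i)
  -- independence: E[f i] = E[g i] * μ(B i)
  have key : ∀ i ∈ S, ∫ ω, f i ω ∂μ = (∫ ω, g i ω ∂μ) * (μ (B i)).toReal := by
    intro i hi
    have hdisj : Disjoint ({i} : Finset (Fin n)) (S.erase i) := by
      simp [Finset.disjoint_singleton_left]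
    have hpair := hindepY.indepFun_finset {i} (S.erase i) hdisj hYmeas
    set φ : ({x // x ∈ ({i} : Finset (Fin n))} → ℝ) → ℝ :=
      fun v => max (v ⟨i, Finset.mem_singleton_self i⟩ - ρ) 0 with hφdef
    set ψ : ({x // x ∈ S.erase i} → ℝ) → ℝ :=
      Set.indicator {v | ∀ j, v j < ρ} (fun _ => (1:ℝ)) with hψdef
    have hφ : Measurable φ := ((measurable_pi_apply _).sub measurable_const).max measurable_const
    have hsm : MeasurableSet {v : {x // x ∈ S.erase i} → ℝ | ∀ j, v j < ρ} := by
      have : {v : {x // x ∈ S.erase i} → ℝ | ∀ j, v j < ρ}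
          = ⋂ j, (fun v : {x // x ∈ S.erase i} → ℝ => v j) ⁻¹' Set.Iio ρ := by
        ext v; simp
      rw [this]
      exact MeasurableSet.iInter fun j => (measurable_pi_apply j) measurableSet_Iio
    have hψ : Measurable ψ := measurable_const.indicator hsm
    have hIndep : IndepFun (g i) (fun ω => (B i).indicator (fun _ => (1:ℝ)) ω) μ := by
      have hcomp := hpair.comp hφ hψ
      have h1 : (φ ∘ fun a (j : ({i} : Finset (Fin n))) => Y j a) = g i := by
        funext ω; simp [hφdef, hgdef]
      have h2 : (ψ ∘ fun a (j : S.erase i) => Y j a)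
          = fun ω => (B i).indicator (fun _ => (1:ℝ)) ω := by
        funext ω
        simp only [Function.comp_apply, hψdef, Set.indicator_apply, Set.mem_setOf_eq]
        rw [hmemB i ω]
        congr 1
        simp only [eq_iff_iff]
        constructor
        · intro H j hj; exact H ⟨j, hj⟩
        · intro H j; exact H j.1 j.2
      rw [h1, h2] at hcomp
      exact hcomp
    have := IndepFun.integral_mul_eq_mul_integral hIndep (hgint i).1
      ((integrable_const (1:ℝ)).indicator (hBmeas i)).1
    calc ∫ ω, f i ω ∂μ
        = ∫ ω, (g i * fun ω => (B i).indicator (fun _ => (1:ℝ)) ω) ω ∂μ := rfl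
      _ = (∫ ω, g i ω ∂μ) * ∫ ω, (B i).indicator (fun _ => (1:ℝ)) ω ∂μ := this
      _ = (∫ ω, g i ω ∂μ) * (μ (B i)).toReal := by
          rw [integral_indicator_const (1:ℝ) (hBmeas i), smul_eq_mul, mul_one, measureReal_def]
  -- pointwise inequality
  have hpt : ∀ ω, (∑ i ∈ S, f i ω) + ρ * Cᶜ.indicator (fun _ => (1:ℝ)) ω
      ≤ S.sup' hS (fun i => Y i ω) := by
    intro ω
    set M := S.sup' hS (fun i => Y i ω) with hMdef
    have hM0 : 0 ≤ M := le_trans (hY0 hS.choose ω) (Finset.le_sup' (fun i => Y i ω) hS.choose_spec)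
    by_cases hC : ω ∈ C
    · have hind : Cᶜ.indicator (fun _ => (1:ℝ)) ω = 0 := by
        simp [Set.indicator_apply, hC]
      have hsum : ∑ i ∈ S, f i ω = 0 := by
        refine Finset.sum_eq_zero fun i hi => ?_
        have : g i ω = 0 := by
          rw [hgdef]; dsimp only
          rw [max_eq_right]
          linarith [(hmemC ω).1 hC i hi]
        rw [hfdef]; dsimp only; rw [this, zero_mul]
      rw [hsum, hind]; linarith
    · have hind : Cᶜ.indicator (fun _ => (1:ℝ)) ω = 1 := by
        simp [Set.indicator_apply, hC]
      obtain ⟨j0, hj0S, hj0⟩ : ∃ j ∈ S, ρ ≤ Y j ω := by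
        by_contra h
        push_neg at h
        exact hC ((hmemC ω).2 h)
      have hMj0 : ρ ≤ M := le_trans hj0 (Finset.le_sup' (fun i => Y i ω) hj0S)
      have hsum : ∑ i ∈ S, f i ω ≤ M - ρ := by
        by_cases hex : ∃ j1 ∈ S, j1 ≠ j0 ∧ ρ ≤ Y j1 ω
        · obtain ⟨j1, hj1S, hj1ne, hj1⟩ := hex
          have : ∑ i ∈ S, f i ω = 0 := by
            refine Finset.sum_eq_zero fun i hi => ?_
            have : ω ∉ B i := by
              rw [hmemB]
              push_neg
              by_cases hij : i = j0
              · exact ⟨j1, Finset.mem_erase.2 ⟨by rw [hij]; exact hj1ne, hj1S⟩, hj1⟩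
              · exact ⟨j0, Finset.mem_erase.2 ⟨fun h => hij h.symm, hj0S⟩, hj0⟩
            rw [hfdef]; dsimp only
            rw [Set.indicator_of_notMem this, mul_zero]
          rw [this]; linarith
        · push_neg at hex
          have hsingle : ∑ i ∈ S, f i ω = f j0 ω := by
            refine Finset.sum_eq_single_of_mem j0 hj0S fun i hi hne => ?_
            have : g i ω = 0 := by
              rw [hgdef]; dsimp only
              rw [max_eq_right]
              linarith [hex i hi hne]
            rw [hfdef]; dsimp only; rw [this, zero_mul]
          rw [hsingle, hfdef]; dsimp only
          have h1 : g j0 ω = Y j0 ω - ρ := by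
            rw [hgdef]; dsimp only; rw [max_eq_left]; linarith
          have h2 : (B j0).indicator (fun _ => (1:ℝ)) ω ≤ 1 := by
            by_cases h : ω ∈ B j0 <;> simp [Set.indicator_apply, h]
          have h3 : (0:ℝ) ≤ (B j0).indicator (fun _ => (1:ℝ)) ω := by
            by_cases h : ω ∈ B j0 <;> simp [Set.indicator_apply, h]
          have h4 : Y j0 ω ≤ M := Finset.le_sup' (fun i => Y i ω) hj0S
          calc g j0 ω * (B j0).indicator (fun _ => (1:ℝ)) ω
              ≤ g j0 ω * 1 := by
                exact mul_le_mul_of_nonneg_left h2 (hg0 j0 ω)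
            _ = Y j0 ω - ρ := by rw [mul_one, h1]
            _ ≤ M - ρ := by linarith
      rw [hind]; linarith
  -- integrability of M
  have hMmeas : Measurable (fun ω => S.sup' hS fun i => Y i ω) := by
    have := Finset.measurable_sup' hS (fun i _ => hYmeas i)
    convert this using 1
    funext ω
    exact (Finset.sup'_apply hS Y ω).symm
  have hMint : Integrable (fun ω => S.sup' hS fun i => Y i ω) μ := by
    refine Integrable.mono' (integrable_finset_sum S fun i _ => hYint i)
      hMmeas.aestronglyMeasurable (Filter.Eventually.of_forall fun ω => ?_)
    rw [Real.norm_eq_abs, abs_of_nonneg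
      (le_trans (hY0 hS.choose ω) (Finset.le_sup' (fun i => Y i ω) hS.choose_spec))]
    obtain ⟨j, hj, hjval⟩ := Finset.exists_mem_eq_sup' hS (fun i => Y i ω)
    rw [hjval]
    exact Finset.single_le_sum (fun i _ => hY0 i ω) hj
  -- LHS integrable
  have hLint : Integrable
      (fun ω => (∑ i ∈ S, f i ω) + ρ * Cᶜ.indicator (fun _ => (1:ℝ)) ω) μ := by
    refine (integrable_finset_sum S fun i _ => hfint i).add ?_
    exact (((integrable_const (1:ℝ)).indicator hCmeas.compl).const_mul ρ)
  -- integrate the pointwise inequality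
  have hmono : ∫ ω, ((∑ i ∈ S, f i ω) + ρ * Cᶜ.indicator (fun _ => (1:ℝ)) ω) ∂μ
      ≤ ∫ ω, S.sup' hS (fun i => Y i ω) ∂μ :=
    integral_mono hLint hMint hpt
  -- compute the left integral
  have hLcalc : ∫ ω, ((∑ i ∈ S, f i ω) + ρ * Cᶜ.indicator (fun _ => (1:ℝ)) ω) ∂μ
      = (∑ i ∈ S, (∫ ω, g i ω ∂μ) * (μ (B i)).toReal) + ρ * (μ Cᶜ).toReal := by
    rw [integral_add (integrable_finset_sum S fun i _ => hfint i)
      (((integrable_const (1:ℝ)).indicator hCmeas.compl).const_mul ρ)]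
    rw [integral_finset_sum S fun i _ => hfint i]
    congr 1
    · exact Finset.sum_congr rfl key
    · rw [integral_const_mul, integral_indicator_const (1:ℝ) hCmeas.compl, smul_eq_mul, mul_one, measureReal_def]
  -- lower bound the left integral by ρ
  have hq1 : (μ C).toReal + (μ Cᶜ).toReal = 1 := by
    have h := prob_add_prob_compl (μ := μ) hCmeas
    have := ENNReal.toReal_add (measure_ne_top μ C) (measure_ne_top μ Cᶜ)
    rw [← this, h]; rfl
  have hlow : ρ ≤ (∑ i ∈ S, (∫ ω, g i ω ∂μ) * (μ (B i)).toReal) + ρ * (μ Cᶜ).toReal := by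
    have hstep : ∀ i ∈ S, (∫ ω, g i ω ∂μ) * (μ C).toReal
        ≤ (∫ ω, g i ω ∂μ) * (μ (B i)).toReal := by
      intro i hi
      refine mul_le_mul_of_nonneg_left ?_ (integral_nonneg fun ω => hg0 i ω)
      exact ENNReal.toReal_mono (measure_ne_top μ (B i)) (measure_mono (hCB i))
    have hsum : ρ * (μ C).toReal ≤ ∑ i ∈ S, (∫ ω, g i ω ∂μ) * (μ (B i)).toReal := by
      calc ρ * (μ C).toReal = (∑ i ∈ S, ∫ ω, g i ω ∂μ) * (μ C).toReal := by rw [hρY]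
        _ = ∑ i ∈ S, (∫ ω, g i ω ∂μ) * (μ C).toReal := Finset.sum_mul ..
        _ ≤ ∑ i ∈ S, (∫ ω, g i ω ∂μ) * (μ (B i)).toReal := Finset.sum_le_sum hstep
    nlinarith [hq1]
  linarith [hmono, hLcalc ▸ hmono]
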